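/- The homogeneous ideal of the rational normal curve C_d ⊂ P^d (d ≥ 2) is generated by quadrics of rank at most 3. Concretely, the ideal generated by { z_i z_{i+2} − z_{i+1}² : 0 ≤ i ≤ d−2 } ∪ { (z_i+z_j)(z_{i+2}+z_{j+2}) − (z_{i+1}+z_{j+1})² : 0 ≤ i < j ≤ d−2 } equals the full vanishing ideal of C_d, and each generator is a quadric of rank ≤ 3. -/

import Mathlib

open MvPolynomial

namespace Stmt9

variable {k : Type*} [Field k]

noncomputable def xv (d : ℕ) (i : ℕ) : MvPolynomial (Fin (d+1)) k :=
  X ⟨min i d, by omega⟩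

lemma xv_eq {d : ℕ} {i : ℕ} (h : i ≤ d) (h' : i < d + 1) :
    (xv d i : MvPolynomial (Fin (d+1)) k) = X ⟨i, h'⟩ := by
  unfold xv; congr 1; exact Fin.ext (by simp [h])

noncomputable def mnr (d a b : ℕ) : MvPolynomial (Fin (d+1)) k :=
  xv d a * xv d (b+1) - xv d (a+1) * xv d b

section Minors

variable {d : ℕ} {J : Ideal (MvPolynomial (Fin (d+1)) k)}
variable (hF : ∀ i, i + 2 ≤ d → xv d i * xv d (i+2) - xv d (i+1)^2 ∈ J)
variable (hG : ∀ i j, i < j → j + 2 ≤ d →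
  (xv d i + xv d j) * (xv d (i+2) + xv d (j+2)) - (xv d (i+1) + xv d (j+1))^2 ∈ J)

private lemma quad_identity {A : Type*} [CommRing A] (p0 p1 p2 q0 q1 q2 : A) :
    p0*q2 - p1*q1 = ((p0+q0)*(p2+q2) - (p1+q1)^2 - (p0*p2 - p1^2) - (q0*q2 - q1^2))
      + (p1*q1 - p2*q0) := by ring

include hF hG in
lemma minor_mem_le : ∀ g a, a + g + 1 ≤ d → mnr d a (a+g) ∈ J := by
  intro g
  induction g using Nat.strong_induction_on with
  | _ g ih =>
    obtain _ | _ | g' := g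
    · intro a ha
      have h0 : (mnr d a (a+0) : MvPolynomial (Fin (d+1)) k) = 0 := by unfold mnr; ring_nf
      rw [h0]; exact J.zero_mem
    · intro a ha
      have := hF a (by omega)
      have e : (mnr d a (a+1) : MvPolynomial (Fin (d+1)) k) = xv d a * xv d (a+2) - xv d (a+1)^2 := by
        unfold mnr
        rw [show a + 1 + 1 = a + 2 by omega]
        ring
      rw [e]; exact this
    · intro a ha
      have h1 := ih g' (by omega) (a+1) (by omega)
      have hg := hG a (a + g' + 1) (by omega) (by omega)
      have hFa := hF a (by omega)
      have hFb := hF (a + g' + 1) (by omega)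
      rw [show a + g' + 1 + 2 = a + g' + 3 by omega, show a + g' + 1 + 1 = a + g' + 2 by omega]
        at hg hFb
      unfold mnr at h1 ⊢
      rw [show a + 1 + g' + 1 = a + g' + 2 by omega, show a + 1 + 1 = a + 2 by omega,
        show a + 1 + g' = a + g' + 1 by omega] at h1
      rw [show a + (g'+2) + 1 = a + g' + 3 by omega, show a + (g'+2) = a + g' + 2 by omega]
      rw [quad_identity (xv d a) (xv d (a+1)) (xv d (a+2)) (xv d (a+g'+1)) (xv d (a+g'+2))
        (xv d (a+g'+3))]
      exact J.add_mem (J.sub_mem (J.sub_mem hg hFa) hFb) h1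

include hF hG in
lemma minor_mem : ∀ a b, a + 1 ≤ d → b + 1 ≤ d → mnr d a b ∈ J := by
  intro a b ha hb
  rcases le_total a b with h | h
  · obtain ⟨g, rfl⟩ := Nat.le.dest h
    exact minor_mem_le hF hG g a (by omega)
  · obtain ⟨g, rfl⟩ := Nat.le.dest h
    have := minor_mem_le hF hG g b (by omega)
    have e : (mnr d (b+g) b : MvPolynomial (Fin (d+1)) k) = -(mnr d b (b+g)) := by unfold mnr; ring
    rw [e]; exact J.neg_mem this

end Minors


noncomputable def prodX (d : ℕ) (A : Multiset ℕ) : MvPolynomial (Fin (d+1)) k :=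
  (A.map (xv d)).prod

lemma prodX_cons (d a : ℕ) (A : Multiset ℕ) :
    (prodX d (a ::ₘ A) : MvPolynomial (Fin (d+1)) k) = xv d a * prodX d A := by
  simp [prodX]

def Vm (A : Multiset ℕ) : ℕ := (A.map (fun x => x*x)).sum

lemma Vm_cons (a : ℕ) (A : Multiset ℕ) : Vm (a ::ₘ A) = a*a + Vm A := by simp [Vm]

section Key

variable {d : ℕ} {J : Ideal (MvPolynomial (Fin (d+1)) k)}
variable (hm : ∀ a b, a + 1 ≤ d → b + 1 ≤ d → (mnr d a b : MvPolynomial (Fin (d+1)) k) ∈ J)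

include hm in
lemma move_mem (A : Multiset ℕ) (a c : ℕ) (h2 : a + 2 ≤ c) (hcd : c ≤ d) :
    (prodX d (a ::ₘ c ::ₘ A) : MvPolynomial (Fin (d+1)) k)
      - prodX d ((a+1) ::ₘ (c-1) ::ₘ A) ∈ J := by
  obtain ⟨c', rfl⟩ : ∃ c', c = c' + 1 := ⟨c-1, by omega⟩
  rw [show c' + 1 - 1 = c' from rfl]
  rw [prodX_cons, prodX_cons, prodX_cons, prodX_cons]
  have e : (xv d a * (xv d (c'+1) * prodX d A) : MvPolynomial (Fin (d+1)) k)
      - xv d (a+1) * (xv d c' * prodX d A) = mnr d a c' * prodX d A := by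
    unfold mnr; ring
  rw [e]
  exact Ideal.mul_mem_right _ _ (hm a c' (by omega) (by omega))

-- uniqueness of gap-free multisets
lemma nogap_unique : ∀ (n : ℕ) (A B : Multiset ℕ), Multiset.card A = n → Multiset.card B = n →
    (∀ a ∈ A, ∀ c ∈ A, c ≤ a + 1) → (∀ a ∈ B, ∀ c ∈ B, c ≤ a + 1) →
    A.sum = B.sum → A = B := by
  intro n
  induction n with
  | zero =>
    intro A B hA hB _ _ _
    rw [Multiset.card_eq_zero] at hA hB; rw [hA, hB]
  | succ n ih =>
    intro A B hA hB hgA hgB hsum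
    have hAne : A.toFinset.Nonempty := by
      rw [Multiset.toFinset_nonempty]
      intro h; rw [h] at hA; simp at hA
    have hBne : B.toFinset.Nonempty := by
      rw [Multiset.toFinset_nonempty]
      intro h; rw [h] at hB; simp at hB
    set a := A.toFinset.min' hAne with ha
    set b := B.toFinset.min' hBne with hb
    have haA : a ∈ A := Multiset.mem_toFinset.mp (A.toFinset.min'_mem hAne)
    have hbB : b ∈ B := Multiset.mem_toFinset.mp (B.toFinset.min'_mem hBne)
    have hamin : ∀ x ∈ A, a ≤ x := fun x hx => A.toFinset.min'_le x (Multiset.mem_toFinset.mpr hx)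
    have hbmin : ∀ x ∈ B, b ≤ x := fun x hx => B.toFinset.min'_le x (Multiset.mem_toFinset.mpr hx)
    -- key: if m is min of A with card A = n+1 and all elements ≤ m+1, then
    -- sum A ≤ m + n*(m+1) < (n+1)*(m') ≤ sum B whenever m+1 ≤ m'
    have main : ∀ (C D : Multiset ℕ) (m m' : ℕ), Multiset.card C = n+1 → Multiset.card D = n+1 →
        m ∈ C → (∀ x ∈ C, x ≤ m + 1) → (∀ x ∈ D, m' ≤ x) → m < m' → C.sum < D.sum := by
      intro C D m m' hC hD hmC hCle hDge hmm'
      have h1 : C.sum = m + (C.erase m).sum := by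
        conv_lhs => rw [← Multiset.cons_erase hmC]
        rw [Multiset.sum_cons]
      have h2 : (C.erase m).sum ≤ (Multiset.card (C.erase m)) • (m+1) :=
        Multiset.sum_le_card_nsmul _ _ (fun x hx => hCle x (Multiset.mem_of_mem_erase hx))
      have h3 : Multiset.card (C.erase m) = n := by
        rw [Multiset.card_erase_of_mem hmC, hC]; rfl
      have h4 : (Multiset.card D) • m' ≤ D.sum := Multiset.card_nsmul_le_sum hDge
      rw [h3] at h2; rw [hD] at h4
      simp only [smul_eq_mul] at h2 h4
      have : m + n * (m+1) < (n+1) * m' := by nlinarith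
      omega
    have hab : a = b := by
      rcases lt_trichotomy a b with h | h | h
      · exact absurd hsum (Nat.ne_of_lt (main A B a b hA hB haA
          (fun x hx => hgA a haA x hx) hbmin h))
      · exact h
      · exact absurd hsum.symm (Nat.ne_of_lt (main B A b a hB hA hbB
          (fun x hx => hgB b hbB x hx) hamin h))
    have hAe : A = a ::ₘ A.erase a := (Multiset.cons_erase haA).symm
    have hBe : B = b ::ₘ B.erase b := (Multiset.cons_erase hbB).symm
    have hrec : A.erase a = B.erase b := by
      apply ih
      · rw [Multiset.card_erase_of_mem haA, hA]; rfl
      · rw [Multiset.card_erase_of_mem hbB, hB]; rfl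
      · intro x hx y hy
        exact hgA x (Multiset.mem_of_mem_erase hx) y (Multiset.mem_of_mem_erase hy)
      · intro x hx y hy
        exact hgB x (Multiset.mem_of_mem_erase hx) y (Multiset.mem_of_mem_erase hy)
      · have e1 : A.sum = a + (A.erase a).sum := by
          conv_lhs => rw [hAe]; rw [Multiset.sum_cons]
        have e2 : B.sum = b + (B.erase b).sum := by
          conv_lhs => rw [hBe]; rw [Multiset.sum_cons]
        omega
    rw [hAe, hBe, hrec, hab]

include hm in
lemma key_lemma : ∀ (n : ℕ) (A B : Multiset ℕ), Vm A + Vm B ≤ n →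
    (∀ x ∈ A, x ≤ d) → (∀ x ∈ B, x ≤ d) →
    Multiset.card A = Multiset.card B → A.sum = B.sum →
    (prodX d A : MvPolynomial (Fin (d+1)) k) - prodX d B ∈ J := by
  intro n
  induction n using Nat.strong_induction_on with
  | _ n ih =>
    intro A B hV hAd hBd hcard hsum
    by_cases hredA : ∃ a ∈ A, ∃ c ∈ A, a + 2 ≤ c
    · obtain ⟨a, haA, c, hcA, hac⟩ := hredA
      have hcA' : c ∈ A.erase a := Multiset.mem_erase_of_ne (by omega) |>.mpr hcA
      set A'' := (A.erase a).erase c with hA''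
      have hdec : A = a ::ₘ c ::ₘ A'' := by
        rw [hA'', Multiset.cons_erase hcA', Multiset.cons_erase haA]
      set A' := (a+1) ::ₘ (c-1) ::ₘ A'' with hA'
      have hmove : (prodX d A : MvPolynomial (Fin (d+1)) k) - prodX d A' ∈ J := by
        rw [hdec]; exact move_mem hm A'' a c hac (hAd c hcA)
      have hsub : ∀ x ∈ A'', x ∈ A := fun x hx =>
        Multiset.mem_of_mem_erase (Multiset.mem_of_mem_erase hx)
      have hVA : Vm A' < Vm A := by
        rw [hdec, hA', Vm_cons, Vm_cons, Vm_cons, Vm_cons]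
        have : (a+1)*(a+1) + (c-1)*(c-1) < a*a + c*c := by
          obtain ⟨e, rfl⟩ : ∃ e, c = a + 2 + e := ⟨c - (a+2), by omega⟩
          have : a + 2 + e - 1 = a + 1 + e := by omega
          rw [this]; nlinarith
        omega
      have hIH : (prodX d A' : MvPolynomial (Fin (d+1)) k) - prodX d B ∈ J := by
        apply ih (Vm A' + Vm B) (by omega) A' B (le_refl _)
        · intro x hx
          rw [hA'] at hx
          rcases Multiset.mem_cons.mp hx with rfl | hx
          · have := hAd c hcA; omega
          · rcases Multiset.mem_cons.mp hx with rfl | hx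
            · have := hAd c hcA; omega
            · exact hAd x (hsub x hx)
        · exact hBd
        · rw [hdec] at hcard
          rw [hA']; simpa using hcard
        · rw [hdec] at hsum
          rw [hA']; simp only [Multiset.sum_cons] at hsum ⊢
          omega
      have : (prodX d A : MvPolynomial (Fin (d+1)) k) - prodX d B
          = (prodX d A - prodX d A') + (prodX d A' - prodX d B) := by ring
      rw [this]; exact J.add_mem hmove hIH
    · by_cases hredB : ∃ a ∈ B, ∃ c ∈ B, a + 2 ≤ c
      · obtain ⟨a, haB, c, hcB, hac⟩ := hredB
        have hcB' : c ∈ B.erase a := Multiset.mem_erase_of_ne (by omega) |>.mpr hcB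
        set B'' := (B.erase a).erase c with hB''
        have hdec : B = a ::ₘ c ::ₘ B'' := by
          rw [hB'', Multiset.cons_erase hcB', Multiset.cons_erase haB]
        set B' := (a+1) ::ₘ (c-1) ::ₘ B'' with hB'
        have hmove : (prodX d B : MvPolynomial (Fin (d+1)) k) - prodX d B' ∈ J := by
          rw [hdec]; exact move_mem hm B'' a c hac (hBd c hcB)
        have hsub : ∀ x ∈ B'', x ∈ B := fun x hx =>
          Multiset.mem_of_mem_erase (Multiset.mem_of_mem_erase hx)
        have hVB : Vm B' < Vm B := by
          rw [hdec, hB', Vm_cons, Vm_cons, Vm_cons, Vm_cons]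
          have : (a+1)*(a+1) + (c-1)*(c-1) < a*a + c*c := by
            obtain ⟨e, rfl⟩ : ∃ e, c = a + 2 + e := ⟨c - (a+2), by omega⟩
            have : a + 2 + e - 1 = a + 1 + e := by omega
            rw [this]; nlinarith
          omega
        have hIH : (prodX d A : MvPolynomial (Fin (d+1)) k) - prodX d B' ∈ J := by
          apply ih (Vm A + Vm B') (by omega) A B' (le_refl _)
          · exact hAd
          · intro x hx
            rw [hB'] at hx
            rcases Multiset.mem_cons.mp hx with rfl | hx
            · have := hBd c hcB; omega
            · rcases Multiset.mem_cons.mp hx with rfl | hx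
              · have := hBd c hcB; omega
              · exact hBd x (hsub x hx)
          · rw [hdec] at hcard
            rw [hB']; simpa using hcard
          · rw [hdec] at hsum
            rw [hB']; simp only [Multiset.sum_cons] at hsum ⊢
            omega
        have : (prodX d A : MvPolynomial (Fin (d+1)) k) - prodX d B
            = (prodX d A - prodX d B') - (prodX d B - prodX d B') := by ring
        rw [this]; exact J.sub_mem hIH hmove
      · push_neg at hredA hredB
        have : A = B := by
          apply nogap_unique (Multiset.card A) A B rfl hcard.symm _ _ hsum
          · intro a ha c hc
            have := hredA a ha c hc; omega
          · intro a ha c hc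
            have := hredB a ha c hc; omega
        rw [this, sub_self]; exact J.zero_mem

end Key


noncomputable def msetOf {d : ℕ} (μ : Fin (d+1) →₀ ℕ) : Multiset ℕ := μ.toMultiset.map Fin.val

lemma msetOf_card {d : ℕ} (μ : Fin (d+1) →₀ ℕ) :
    Multiset.card (msetOf μ) = μ.sum fun _ e => e := by
  rw [msetOf, Multiset.card_map, Finsupp.card_toMultiset]
  rfl

lemma msetOf_sum {d : ℕ} (μ : Fin (d+1) →₀ ℕ) :
    (msetOf μ).sum = μ.sum fun i e => i.1 * e := by
  rw [msetOf, Finsupp.toMultiset_map, Finsupp.sum_toMultiset]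
  rw [Finsupp.sum_mapDomain_index (by simp) (by intro a m1 m2; rw [add_smul])]
  apply Finsupp.sum_congr
  intro i _
  rw [smul_eq_mul, mul_comm]

lemma msetOf_le {d : ℕ} (μ : Fin (d+1) →₀ ℕ) : ∀ x ∈ msetOf μ, x ≤ d := by
  intro x hx
  rw [msetOf, Multiset.mem_map] at hx
  obtain ⟨i, _, rfl⟩ := hx
  omega

lemma prodX_msetOf {d : ℕ} (μ : Fin (d+1) →₀ ℕ) :
    (prodX d (msetOf μ) : MvPolynomial (Fin (d+1)) k) = monomial μ 1 := by
  rw [prodX, msetOf, Multiset.map_map, Finsupp.toMultiset_map, Finsupp.prod_toMultiset]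
  rw [Finsupp.prod_mapDomain_index (by simp) (by intro a m1 m2; rw [pow_add])]
  rw [← prod_X_pow_eq_monomial, Finsupp.prod]
  apply Finset.prod_congr rfl
  intro i _
  have : (xv d i.1 : MvPolynomial (Fin (d+1)) k) = X i := by
    unfold xv
    congr 1
    exact Fin.ext (by simp [Nat.lt_succ_iff.mp i.2])
  rw [Function.comp_apply, this]



noncomputable def keyF (d : ℕ) (μ : Fin (d+1) →₀ ℕ) : ℕ × ℕ :=
  (μ.sum fun i e => (d - i.1) * e, μ.sum fun i e => i.1 * e)

lemma key_uw (d : ℕ) (μ : Fin (d+1) →₀ ℕ) :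
    (keyF d μ).1 + (keyF d μ).2 = d * μ.sum (fun _ e => e) := by
  rw [keyF]
  simp only [Finsupp.sum]
  rw [← Finset.sum_add_distrib, Finset.mul_sum]
  apply Finset.sum_congr rfl
  intro i _
  have hi : i.1 ≤ d := Nat.lt_succ_iff.mp i.2
  rw [← add_mul]
  congr 1
  omega

lemma key_deg {d : ℕ} (hd : 0 < d) (μ ν : Fin (d+1) →₀ ℕ) (h : keyF d μ = keyF d ν) :
    μ.sum (fun _ e => e) = ν.sum (fun _ e => e) := by
  have h1 := key_uw d μ
  have h2 := key_uw d ν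
  rw [h] at h1
  have := h1.symm.trans h2
  exact Nat.eq_of_mul_eq_mul_left hd this

section Main

variable {d : ℕ} {J : Ideal (MvPolynomial (Fin (d+1)) k)}
variable (hm : ∀ a b, a + 1 ≤ d → b + 1 ≤ d → (mnr d a b : MvPolynomial (Fin (d+1)) k) ∈ J)

include hm in
lemma mono_sub_mem (hd : 0 < d) (μ ν : Fin (d+1) →₀ ℕ) (h : keyF d μ = keyF d ν) :
    (monomial μ (1:k) : MvPolynomial (Fin (d+1)) k) - monomial ν 1 ∈ J := by
  rw [← prodX_msetOf, ← prodX_msetOf]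
  apply key_lemma hm (Vm (msetOf μ) + Vm (msetOf ν)) _ _ le_rfl (msetOf_le μ) (msetOf_le ν)
  · rw [msetOf_card, msetOf_card]
    exact key_deg hd μ ν h
  · rw [msetOf_sum, msetOf_sum]
    exact congrArg Prod.snd h

noncomputable def gmap (d : ℕ) : Fin (d+1) → MvPolynomial (Fin 2) k :=
  fun m => X 0 ^ (d - m.1) * X 1 ^ m.1

lemma aeval_monomial_eq (d : ℕ) (μ : Fin (d+1) →₀ ℕ) (c : k) :
    aeval (gmap d) (monomial μ c) =
      monomial (Finsupp.single 0 (keyF d μ).1 + Finsupp.single 1 (keyF d μ).2) c := by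
  rw [aeval_monomial]
  have h1 : μ.prod (fun i e => (gmap d i : MvPolynomial (Fin 2) k) ^ e)
      = X 0 ^ (keyF d μ).1 * (X 1 : MvPolynomial (Fin 2) k) ^ (keyF d μ).2 := by
    rw [Finsupp.prod]
    have h2 : ∀ i ∈ μ.support, (gmap d i : MvPolynomial (Fin 2) k) ^ μ i
        = X 0 ^ ((d - i.1) * μ i) * X 1 ^ (i.1 * μ i) := by
      intro i _
      rw [gmap, mul_pow, ← pow_mul, ← pow_mul]
    rw [Finset.prod_congr rfl h2, Finset.prod_mul_distrib,
      Finset.prod_pow_eq_pow_sum, Finset.prod_pow_eq_pow_sum]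
    rfl
  rw [h1, X_pow_eq_monomial, X_pow_eq_monomial, monomial_mul, MvPolynomial.algebraMap_eq,
    C_mul_monomial, one_mul, mul_one]

lemma single_pair_eq_iff (u w u' w' : ℕ) :
    (Finsupp.single (0 : Fin 2) u + Finsupp.single 1 w) = Finsupp.single 0 u' + Finsupp.single 1 w'
      ↔ (u = u' ∧ w = w') := by
  constructor
  · intro h
    have h0 := DFunLike.congr_fun h (0 : Fin 2)
    have h1 := DFunLike.congr_fun h (1 : Fin 2)
    simp [Finsupp.single_apply] at h0 h1
    exact ⟨h0, h1⟩
  · rintro ⟨rfl, rfl⟩; rfl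

include hm in
lemma main_rev [Infinite k] (hd : 0 < d) (p : MvPolynomial (Fin (d+1)) k)
    (hvan : ∀ s t : k, eval (fun m : Fin (d + 1) => s ^ (d - m.1) * t ^ m.1) p = 0) :
    p ∈ J := by
  have hcomp : ∀ x : Fin 2 → k,
      eval x (aeval (gmap d) p) = eval (fun m => eval x (gmap d m : MvPolynomial (Fin 2) k)) p := by
    intro x
    rw [aeval_def, MvPolynomial.algebraMap_eq, eval₂_comp_left (eval x) C (gmap d) p]
    have e1 : (eval x).comp (C : k →+* MvPolynomial (Fin 2) k) = RingHom.id k :=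
      RingHom.ext fun a => eval_C a
    rw [e1]
    rfl
  have hΦ0 : aeval (gmap d) p = (0 : MvPolynomial (Fin 2) k) := by
    apply MvPolynomial.funext
    intro x
    rw [hcomp x, map_zero]
    have : (fun m : Fin (d+1) => eval x (gmap d m : MvPolynomial (Fin 2) k))
        = fun m : Fin (d+1) => (x 0) ^ (d - m.1) * (x 1) ^ m.1 := by
      funext m; simp [gmap]
    rw [this]
    exact hvan (x 0) (x 1)
  have hfib : ∀ κ : ℕ × ℕ,
      ((p.support.filter (fun μ => keyF d μ = κ)).sum fun μ => coeff μ p) = 0 := by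
    intro κ
    have h1 : aeval (gmap d) p = ∑ μ ∈ p.support,
        monomial (Finsupp.single 0 (keyF d μ).1 + Finsupp.single 1 (keyF d μ).2) (coeff μ p) := by
      conv_lhs => rw [← support_sum_monomial_coeff p]
      rw [map_sum]
      exact Finset.sum_congr rfl fun μ _ => aeval_monomial_eq d μ (coeff μ p)
    have h2 : coeff (Finsupp.single (0:Fin 2) κ.1 + Finsupp.single 1 κ.2)
        (aeval (gmap d) p : MvPolynomial (Fin 2) k) = 0 := by rw [hΦ0]; simp
    rw [h1, coeff_sum] at h2
    rw [Finset.sum_filter]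
    have h3 : ∀ μ ∈ p.support, (if keyF d μ = κ then coeff μ p else 0)
        = coeff (Finsupp.single (0:Fin 2) κ.1 + Finsupp.single 1 κ.2)
          ((monomial (Finsupp.single (0:Fin 2) (keyF d μ).1 + Finsupp.single 1 (keyF d μ).2))
            (coeff μ p)) := by
      intro μ _
      rw [coeff_monomial]
      by_cases hc : keyF d μ = κ
      · rw [if_pos hc, if_pos (by rw [hc])]
      · rw [if_neg hc, if_neg (fun h => hc (Prod.ext ((single_pair_eq_iff _ _ _ _).mp h).1
          ((single_pair_eq_iff _ _ _ _).mp h).2))]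
    rw [Finset.sum_congr rfl h3]
    exact h2
  have hrep : p = ∑ κ ∈ p.support.image (keyF d),
      ∑ μ ∈ p.support.filter (fun μ => keyF d μ = κ), monomial μ (coeff μ p) := by
    rw [Finset.sum_fiberwise_of_maps_to (fun μ hμ => Finset.mem_image_of_mem _ hμ),
      support_sum_monomial_coeff]
  rw [hrep]
  apply Ideal.sum_mem
  intro κ hκ
  obtain ⟨μ₀, hμ₀mem, hμ₀key⟩ := Finset.mem_image.mp hκ
  have hdecomp : ∀ μ ∈ p.support.filter (fun μ => keyF d μ = κ),
      (monomial μ (coeff μ p) : MvPolynomial (Fin (d+1)) k)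
        = C (coeff μ p) * (monomial μ 1 - monomial μ₀ 1) + C (coeff μ p) * monomial μ₀ 1 := by
    intro μ _
    rw [mul_sub, C_mul_monomial, mul_one]
    ring
  rw [Finset.sum_congr rfl hdecomp, Finset.sum_add_distrib]
  apply J.add_mem
  · apply Ideal.sum_mem
    intro μ hμ
    have hμk : keyF d μ = κ := (Finset.mem_filter.mp hμ).2
    exact Ideal.mul_mem_left _ _ (mono_sub_mem hm hd μ μ₀ (by rw [hμk, hμ₀key]))
  · rw [← Finset.sum_mul, ← map_sum, hfib κ, map_zero, zero_mul]
    exact J.zero_mem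

end Main

section Matrices
open Matrix

variable {n : ℕ}

lemma sum_single_smul (a : Fin n) :
    (∑ i, (Pi.single a (1:k) : Fin n → k) i • (X i : MvPolynomial (Fin n) k)) = X a := by
  rw [Finset.sum_eq_single a]
  · rw [Pi.single_eq_same, one_smul]
  · intro b _ hb; rw [Pi.single_eq_of_ne hb, zero_smul]
  · intro h; exact absurd (Finset.mem_univ a) h

lemma sum_pair_smul (a b : Fin n) :
    (∑ i, ((Pi.single a (1:k) : Fin n → k) + (Pi.single b (1:k) : Fin n → k)) i • (X i : MvPolynomial (Fin n) k))
      = X a + X b := by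
  simp only [Pi.add_apply, add_smul, Finset.sum_add_distrib, sum_single_smul]

lemma sum_bilin (v w : Fin n → k) :
    (∑ i, ∑ j, (v i * w j) • (X i * X j : MvPolynomial (Fin n) k))
      = (∑ i, v i • (X i : MvPolynomial (Fin n) k))
        * (∑ j, w j • (X j : MvPolynomial (Fin n) k)) := by
  rw [Finset.sum_mul]
  apply Finset.sum_congr rfl
  intro i _
  rw [Finset.mul_sum]
  apply Finset.sum_congr rfl
  intro j _
  rw [smul_mul_smul_comm]

lemma quadric_matrix (h2 : (2:k) ≠ 0) (v0 v1 v2 : Fin n → k) :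
    ∃ M : Matrix (Fin n) (Fin n) k, M.IsSymm ∧ M.rank ≤ 3 ∧
      (∑ i, ∑ j, M i j • (X i * X j) : MvPolynomial (Fin n) k)
        = (∑ i, v0 i • (X i : MvPolynomial (Fin n) k)) * (∑ i, v2 i • X i)
          - (∑ i, v1 i • X i)^2 := by
  set A : Matrix (Fin 3) (Fin n) k := Matrix.of ![v0, v1, v2] with hA
  set B : Matrix (Fin 3) (Fin 3) k := Matrix.of ![![0,0,2⁻¹], ![0,-1,0], ![2⁻¹,0,0]] with hB
  have hBsymm : Bᵀ = B := by
    ext i j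
    fin_cases i <;> fin_cases j <;> simp [hB]
  refine ⟨Aᵀ * B * A, ?_, ?_, ?_⟩
  · show (Aᵀ * B * A)ᵀ = Aᵀ * B * A
    rw [Matrix.transpose_mul, Matrix.transpose_mul, Matrix.transpose_transpose, hBsymm,
      Matrix.mul_assoc]
  · calc (Aᵀ * B * A).rank ≤ (Aᵀ * B).rank := Matrix.rank_mul_le_left _ _
      _ ≤ Fintype.card (Fin 3) := Matrix.rank_le_card_width _
      _ = 3 := by simp
  · have hM : ∀ i j, (Aᵀ * B * A) i j
        = 2⁻¹ * (v0 i * v2 j) + 2⁻¹ * (v2 i * v0 j) - v1 i * v1 j := by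
      intro i j
      simp [Matrix.mul_apply, Fin.sum_univ_three, hA, hB, Matrix.vecHead, Matrix.vecTail]
      ring
    have step1 : (∑ i, ∑ j, (Aᵀ * B * A) i j • (X i * X j) : MvPolynomial (Fin n) k)
        = ∑ i, ∑ j, ((2⁻¹:k) • ((v0 i * v2 j) • (X i * X j))
            + (2⁻¹:k) • ((v2 i * v0 j) • (X i * X j))
            - (v1 i * v1 j) • ((X i : MvPolynomial (Fin n) k) * X j)) := by
      apply Finset.sum_congr rfl; intro i _
      apply Finset.sum_congr rfl; intro j _
      rw [hM i j, sub_smul, add_smul, mul_smul (2⁻¹:k) (v0 i * v2 j),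
        mul_smul (2⁻¹:k) (v2 i * v0 j)]
    rw [step1]
    simp only [Finset.sum_sub_distrib, Finset.sum_add_distrib, ← Finset.smul_sum]
    rw [sum_bilin, sum_bilin, sum_bilin]
    rw [mul_comm (∑ i, v2 i • (X i : MvPolynomial (Fin n) k)) (∑ i, v0 i • X i)]
    rw [← add_smul]
    have : (2⁻¹ + 2⁻¹ : k) = 1 := by
      rw [← two_mul, mul_inv_cancel₀ h2]
    rw [this, one_smul, sq]

end Matrices


end Stmt9

open MvPolynomial

theorem stmt_9 {k : Type*} [Field k] [IsAlgClosed k] (hchar : ringChar k ≠ 2)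
    (d : ℕ) (hd : 2 ≤ d)
    (S : Set (MvPolynomial (Fin (d + 1)) k))
    (hS : S = {f | ∃ i : ℕ, ∃ hi : i ≤ d - 2,
        f = X (⟨i, by omega⟩ : Fin (d + 1)) * X ⟨i + 2, by omega⟩ - X ⟨i + 1, by omega⟩ ^ 2} ∪
      {f | ∃ i j : ℕ, ∃ hij : i < j, ∃ hj : j ≤ d - 2,
        f = (X (⟨i, by omega⟩ : Fin (d + 1)) + X ⟨j, by omega⟩) *
            (X ⟨i + 2, by omega⟩ + X ⟨j + 2, by omega⟩) -
          (X ⟨i + 1, by omega⟩ + X ⟨j + 1, by omega⟩) ^ 2}) :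
    (∀ p : MvPolynomial (Fin (d + 1)) k,
      p ∈ Ideal.span S ↔
        ∀ s t : k, eval (fun m : Fin (d + 1) => s ^ (d - m.1) * t ^ m.1) p = 0) ∧
    (∀ f ∈ S, ∃ M : Matrix (Fin (d + 1)) (Fin (d + 1)) k,
      M.IsSymm ∧ M.rank ≤ 3 ∧ f = ∑ i, ∑ j, M i j • (X i * X j)) := by
  have h2 : (2:k) ≠ 0 := Ring.two_ne_zero hchar
  have hF : ∀ i, i + 2 ≤ d → (Stmt9.xv d i * Stmt9.xv d (i+2) - Stmt9.xv d (i+1)^2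
      : MvPolynomial (Fin (d+1)) k) ∈ Ideal.span S := by
    intro i hi
    apply Ideal.subset_span
    rw [hS]
    apply Set.mem_union_left
    refine ⟨i, by omega, ?_⟩
    rw [show (Stmt9.xv d i : MvPolynomial (Fin (d+1)) k) = X ⟨i, by omega⟩ from
        Stmt9.xv_eq (by omega) (by omega),
      show (Stmt9.xv d (i+1) : MvPolynomial (Fin (d+1)) k) = X ⟨i+1, by omega⟩ from
        Stmt9.xv_eq (by omega) (by omega),
      show (Stmt9.xv d (i+2) : MvPolynomial (Fin (d+1)) k) = X ⟨i+2, by omega⟩ from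
        Stmt9.xv_eq (by omega) (by omega)]
  have hG : ∀ i j, i < j → j + 2 ≤ d →
      ((Stmt9.xv d i + Stmt9.xv d j) * (Stmt9.xv d (i+2) + Stmt9.xv d (j+2))
        - (Stmt9.xv d (i+1) + Stmt9.xv d (j+1))^2 : MvPolynomial (Fin (d+1)) k)
        ∈ Ideal.span S := by
    intro i j hij hj
    apply Ideal.subset_span
    rw [hS]
    apply Set.mem_union_right
    refine ⟨i, j, hij, by omega, ?_⟩
    rw [show (Stmt9.xv d i : MvPolynomial (Fin (d+1)) k) = X ⟨i, by omega⟩ from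
        Stmt9.xv_eq (by omega) (by omega),
      show (Stmt9.xv d (i+1) : MvPolynomial (Fin (d+1)) k) = X ⟨i+1, by omega⟩ from
        Stmt9.xv_eq (by omega) (by omega),
      show (Stmt9.xv d (i+2) : MvPolynomial (Fin (d+1)) k) = X ⟨i+2, by omega⟩ from
        Stmt9.xv_eq (by omega) (by omega),
      show (Stmt9.xv d j : MvPolynomial (Fin (d+1)) k) = X ⟨j, by omega⟩ from
        Stmt9.xv_eq (by omega) (by omega),
      show (Stmt9.xv d (j+1) : MvPolynomial (Fin (d+1)) k) = X ⟨j+1, by omega⟩ from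
        Stmt9.xv_eq (by omega) (by omega),
      show (Stmt9.xv d (j+2) : MvPolynomial (Fin (d+1)) k) = X ⟨j+2, by omega⟩ from
        Stmt9.xv_eq (by omega) (by omega)]
  have hm := Stmt9.minor_mem hF hG
  constructor
  · intro p
    constructor
    · intro hp s t
      have hker : Ideal.span S ≤
          RingHom.ker (eval (fun m : Fin (d + 1) => s ^ (d - m.1) * t ^ m.1)) := by
        rw [Ideal.span_le]
        rintro f hf
        rw [hS] at hf
        rw [SetLike.mem_coe, RingHom.mem_ker]
        rcases hf with ⟨i, hi, rfl⟩ | ⟨i, j, hij, hj, rfl⟩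
        · simp only [map_sub, map_mul, map_pow, eval_X]
          rw [show d - i = d - i - 2 + 2 by omega, show d - (i+1) = d - i - 2 + 1 by omega,
            show d - (i+2) = d - i - 2 by omega]
          ring
        · simp only [map_sub, map_mul, map_pow, map_add, eval_X]
          rw [show d - i = d - i - 2 + 2 by omega, show d - (i+1) = d - i - 2 + 1 by omega,
            show d - (i+2) = d - i - 2 by omega, show d - j = d - j - 2 + 2 by omega,
            show d - (j+1) = d - j - 2 + 1 by omega, show d - (j+2) = d - j - 2 by omega]
          ring
      exact RingHom.mem_ker.mp (hker hp)
    · intro hvan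
      exact Stmt9.main_rev hm (by omega) p hvan
  · intro f hf
    rw [hS] at hf
    rcases hf with ⟨i, hi, rfl⟩ | ⟨i, j, hij, hj, rfl⟩
    · obtain ⟨M, hsymm, hrank, hsum⟩ := Stmt9.quadric_matrix h2
        (Pi.single (⟨i, by omega⟩ : Fin (d+1)) (1:k))
        (Pi.single (⟨i+1, by omega⟩ : Fin (d+1)) (1:k))
        (Pi.single (⟨i+2, by omega⟩ : Fin (d+1)) (1:k))
      refine ⟨M, hsymm, hrank, ?_⟩
      rw [hsum, Stmt9.sum_single_smul, Stmt9.sum_single_smul, Stmt9.sum_single_smul]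
    · obtain ⟨M, hsymm, hrank, hsum⟩ := Stmt9.quadric_matrix h2
        (Pi.single (⟨i, by omega⟩ : Fin (d+1)) (1:k) + Pi.single (⟨j, by omega⟩ : Fin (d+1)) (1:k))
        (Pi.single (⟨i+1, by omega⟩ : Fin (d+1)) (1:k)
          + Pi.single (⟨j+1, by omega⟩ : Fin (d+1)) (1:k))
        (Pi.single (⟨i+2, by omega⟩ : Fin (d+1)) (1:k)
          + Pi.single (⟨j+2, by omega⟩ : Fin (d+1)) (1:k))
      refine ⟨M, hsymm, hrank, ?_⟩
      rw [hsum, Stmt9.sum_pair_smul, Stmt9.sum_pair_smul, Stmt9.sum_pair_smul]
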